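/- arXiv:2311.02325 — 11 statements merged into one kernel-verified Lean document; each statement's English description precedes it below -/
import Mathlib

section
/- Let (X, μ) be a supratopological space. Then the collection B = {(G × G) ∪ ((X \ G) × X) : G ∈ μ} forms a base for a generalized quasi-uniformity U_μ on X, and the generalized topology induced by U_μ equals μ. -/
open Set

/-- A generalized quasi-uniformity (g-quasi uniformity) on `X`. -/
def IsGQU {X : Type} (U : Set (Set (X × X))) : Prop :=
  U.Nonempty ∧
  (∀ A ∈ U, ∀ x : X, (x, x) ∈ A) ∧
  (∀ A ∈ U, ∀ B : Set (X × X), A ⊆ B → B ∈ U) ∧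
  (∀ A ∈ U, ∃ V ∈ U, SetRel.comp V V ⊆ A)

/-- `B` is a base for the g-quasi uniformity `U`. -/
def IsGQUBaseOf {X : Type} (U B : Set (Set (X × X))) : Prop :=
  B.Nonempty ∧ B ⊆ U ∧ ∀ A ∈ U, ∃ b ∈ B, b ⊆ A

/-- The collection of all supersets of members of `B`. -/
def genGQU {X : Type} (B : Set (Set (X × X))) : Set (Set (X × X)) :=
  {A | ∃ b ∈ B, b ⊆ A}

/-- The generalized topology (supratopology) induced by a g-quasi uniformity. -/
def muU {X : Type} (U : Set (Set (X × X))) : Set (Set X) :=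
  {G | ∀ x ∈ G, ∃ A ∈ U, {y | (x, y) ∈ A} ⊆ G}

/-- A strong generalized topology (supratopology). -/
def IsSupra {X : Type} (μ : Set (Set X)) : Prop :=
  ∅ ∈ μ ∧ Set.univ ∈ μ ∧ ∀ S ⊆ μ, ⋃₀ S ∈ μ

/-- g-quasi uniform continuity. -/
def GQUCont {X Y : Type} (U : Set (Set (X × X))) (V : Set (Set (Y × Y)))
    (f : X → Y) : Prop :=
  ∀ A ∈ V, Prod.map f f ⁻¹' A ∈ U

/-- The Pervin-type base associated to a supratopology. -/
def pervinBase {X : Type} (μ : Set (Set X)) : Set (Set (X × X)) :=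
  (fun G => G ×ˢ G ∪ Gᶜ ×ˢ (Set.univ : Set X)) '' μ

/-- A Cauchy net. -/
def CauchyNet {X D : Type} [Preorder D] (U : Set (Set (X × X))) (S : D → X) : Prop :=
  ∀ A ∈ U, ∃ m : D, ∀ p q : D, m ≤ p → m ≤ q → (S p, S q) ∈ A

/-- A pseudo-Cauchy net. -/
def PseudoCauchyNet {X D : Type} [Preorder D] (U : Set (Set (X × X))) (S : D → X) : Prop :=
  ∀ A ∈ U, ∀ p : D, ∃ m n : D, p ≤ m ∧ p ≤ n ∧ m ≠ n ∧ (S m, S n) ∈ A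

/-- A net has pairwise distinct terms. -/
def DistinctTerms {X D : Type} (S : D → X) : Prop :=
  ∀ m n : D, m ≠ n → S m ≠ S n

/-- `c` is a cluster point of the net `S` w.r.t. the induced supratopology. -/
def ClusterPtNet {X D : Type} [Preorder D] (U : Set (Set (X × X))) (S : D → X) (c : X) : Prop :=
  ∀ G ∈ muU U, c ∈ G → ∀ n : D, ∃ m : D, n ≤ m ∧ S m ∈ G

/-- The net `S` converges to `c` w.r.t. the induced supratopology. -/
def ConvNet {X D : Type} [Preorder D] (U : Set (Set (X × X))) (S : D → X) (c : X) : Prop :=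
  ∀ G ∈ muU U, c ∈ G → ∃ m : D, ∀ n : D, m ≤ n → S n ∈ G

/-- A G-Cauchy sequence. -/
def GCauchySeq {X : Type} (U : Set (Set (X × X))) (x : ℕ → X) : Prop :=
  ∀ A ∈ U, ∃ k : ℕ, ∀ n ≥ k, (x n, x (n + 1)) ∈ A

/-- Completeness: every Cauchy net converges. -/
def CompleteGQU {X : Type} (U : Set (Set (X × X))) : Prop :=
  ∀ (D : Type) [Preorder D] [IsDirected D (· ≤ ·)] [Nonempty D],
    ∀ S : D → X, CauchyNet U S → ∃ c : X, ConvNet U S c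

/-- Strongly Lebesgue: every pseudo-Cauchy net has a cluster point. -/
def StronglyLebesgueGQU {X : Type} (U : Set (Set (X × X))) : Prop :=
  ∀ (D : Type) [Preorder D] [IsDirected D (· ≤ ·)] [Nonempty D],
    ∀ S : D → X, PseudoCauchyNet U S → ∃ c : X, ClusterPtNet U S c

/-- Lebesgue: every pseudo-Cauchy net with pairwise distinct terms has a cluster point. -/
def LebesgueGQU {X : Type} (U : Set (Set (X × X))) : Prop :=
  ∀ (D : Type) [Preorder D] [IsDirected D (· ≤ ·)] [Nonempty D],
    ∀ S : D → X, PseudoCauchyNet U S → DistinctTerms S → ∃ c : X, ClusterPtNet U S c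

/-- Sequentially Lebesgue. -/
def SeqLebesgueGQU {X : Type} (U : Set (Set (X × X))) : Prop :=
  ∀ x : ℕ → X, PseudoCauchyNet U x → DistinctTerms x → ∃ c : X, ClusterPtNet U x c

/-- G-complete: every G-Cauchy sequence converges. -/
def GCompleteGQU {X : Type} (U : Set (Set (X × X))) : Prop :=
  ∀ x : ℕ → X, GCauchySeq U x → ∃ c : X, ConvNet U x c

/-- Weak G-complete: every G-Cauchy sequence has a cluster point. -/
def WeakGCompleteGQU {X : Type} (U : Set (Set (X × X))) : Prop :=
  ∀ x : ℕ → X, GCauchySeq U x → ∃ c : X, ClusterPtNet U x c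

/-- Compactness of the induced supratopology. -/
def CompactGQU {X : Type} (U : Set (Set (X × X))) : Prop :=
  ∀ C ⊆ muU U, ⋃₀ C = Set.univ →
    ∃ F ⊆ C, F.Finite ∧ ⋃₀ F = Set.univ

/-- The standard base of the product g-quasi uniformity. -/
def piBase {I : Type} {X : I → Type} (U : ∀ i, Set (Set (X i × X i))) :
    Set (Set ((∀ i, X i) × (∀ i, X i))) :=
  {S | ∃ i : I, ∃ A ∈ U i,
    S = Prod.map (fun x : ∀ j, X j => x i) (fun x : ∀ j, X j => x i) ⁻¹' A}

/-- The product g-quasi uniformity. -/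
def piGQU {I : Type} {X : I → Type} (U : ∀ i, Set (Set (X i × X i))) :
    Set (Set ((∀ i, X i) × (∀ i, X i))) :=
  genGQU (piBase U)

theorem stmt_2 {X : Type} [Nonempty X] (μ : Set (Set X)) (hμ : IsSupra μ) :
    ((pervinBase μ).Nonempty ∧
      (∀ b ∈ pervinBase μ, ∀ x : X, (x, x) ∈ b) ∧
      (∀ b ∈ pervinBase μ, ∃ V ∈ pervinBase μ, SetRel.comp V V ⊆ b)) ∧
    muU (genGQU (pervinBase μ)) = μ := by
  obtain ⟨hemp, huniv, hunion⟩ := hμ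
  constructor
  · refine ⟨⟨_, ⟨∅, hemp, rfl⟩⟩, ?_, ?_⟩
    · rintro b ⟨G, hG, rfl⟩ x
      by_cases hx : x ∈ G
      · exact Or.inl ⟨hx, hx⟩
      · exact Or.inr ⟨hx, trivial⟩
    · rintro b ⟨G, hG, rfl⟩
      refine ⟨_, ⟨G, hG, rfl⟩, ?_⟩
      rintro ⟨x, z⟩ ⟨y, hxy, hyz⟩
      rcases hxy with ⟨hx, hy⟩ | ⟨hx, -⟩
      · rcases hyz with ⟨-, hz⟩ | ⟨hy', -⟩
        · exact Or.inl ⟨hx, hz⟩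
        · exact absurd hy hy'
      · exact Or.inr ⟨hx, trivial⟩
  · ext G
    constructor
    · intro hG
      by_cases hcase : ∀ x ∈ G, ∃ H ∈ μ, x ∈ H ∧ H ⊆ G
      · choose H hHμ hxH hHG using hcase
        have : G = ⋃₀ {S | ∃ x : X, ∃ hx : x ∈ G, S = H x hx} := by
          ext y
          constructor
          · intro hy
            exact ⟨H y hy, ⟨y, hy, rfl⟩, hxH y hy⟩
          · rintro ⟨S, ⟨x, hx, rfl⟩, hyS⟩
            exact hHG x hx hyS
        rw [this]
        apply hunion
        rintro S ⟨x, hx, rfl⟩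
        exact hHμ x hx
      · push_neg at hcase
        obtain ⟨x, hxG, hx⟩ := hcase
        obtain ⟨A, ⟨b, ⟨K, hKμ, rfl⟩, hbA⟩, hAG⟩ := hG x hxG
        by_cases hxK : x ∈ K
        · exact absurd (fun y hyK => hAG (hbA (Or.inl ⟨hxK, hyK⟩))) (hx K hKμ hxK)
        · have : G = univ := by
            apply eq_univ_of_forall
            intro y
            exact hAG (hbA (Or.inr ⟨hxK, trivial⟩))
          rw [this]; exact huniv
    · intro hG x hxG
      refine ⟨_, ⟨_, ⟨G, hG, rfl⟩, subset_rfl⟩, ?_⟩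
      intro y hy
      rcases hy with ⟨-, hyG⟩ | ⟨hx, -⟩
      · exact hyG
      · exact absurd hxG hx
end

section
/- Let (X, μ) and (X', μ') be supratopological spaces. If f : X → X' is generalized continuous (i.e., f⁻¹(G) ∈ μ for all G ∈ μ'), then f : (X, U_μ) → (X', U_{μ'}) is g-quasi uniform continuous, where U_μ and U_{μ'} denote the Pervin-type generalized quasi-uniformities generated by the bases {(G × G) ∪ ((X \ G) × X) : G ∈ μ} and {(G × G) ∪ ((X' \ G) × X') : G ∈ μ'} respectively. -/
open Set

theorem stmt_3 {X X' : Type} [Nonempty X] [Nonempty X']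
    (μ : Set (Set X)) (μ' : Set (Set X')) (hμ : IsSupra μ) (hμ' : IsSupra μ')
    (f : X → X') (hf : ∀ G ∈ μ', f ⁻¹' G ∈ μ) :
    GQUCont (genGQU (pervinBase μ)) (genGQU (pervinBase μ')) f := by
  rintro A ⟨b, ⟨G, hG, rfl⟩, hbA⟩
  refine ⟨(f ⁻¹' G) ×ˢ (f ⁻¹' G) ∪ (f ⁻¹' G)ᶜ ×ˢ Set.univ, ⟨f ⁻¹' G, hf G hG, rfl⟩, ?_⟩
  intro p hp
  apply hbA
  rcases hp with h | h
  · exact Or.inl ⟨h.1, h.2⟩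
  · exact Or.inr ⟨h.1, trivial⟩
end

section
/- Let (X, U) be the product generalized quasi-uniform space of a family {(X_i, U_i) : i ∈ I}. Then (X, U) is complete if and only if each (X_i, U_i) is complete. -/
open Set

/-- Entourage characterization of convergence. -/
lemma convNet_iff_ent {X D : Type} [Preorder D] {U : Set (Set (X × X))}
    (hU : IsGQU U) (S : D → X) (c : X) :
    ConvNet U S c ↔ ∀ A ∈ U, ∃ m : D, ∀ n : D, m ≤ n → (c, S n) ∈ A := by
  obtain ⟨-, hrefl, -, hcomp⟩ := hU
  constructor
  · intro hconv A hA
    set G : Set X := {x | ∃ W ∈ U, {y | (x, y) ∈ W} ⊆ {y | (c, y) ∈ A}} with hG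
    have hGopen : G ∈ muU U := by
      intro x hx
      obtain ⟨W, hW, hWsub⟩ := hx
      obtain ⟨W', hW', hW'comp⟩ := hcomp W hW
      refine ⟨W', hW', fun y hy => ⟨W', hW', fun z hz => ?_⟩⟩
      exact hWsub (hW'comp ⟨y, hy, hz⟩)
    have hcG : c ∈ G := ⟨A, hA, fun y hy => hy⟩
    obtain ⟨m, hm⟩ := hconv G hGopen hcG
    refine ⟨m, fun n hn => ?_⟩
    obtain ⟨W, hW, hWsub⟩ := hm n hn
    exact hWsub (hrefl W hW (S n))
  · intro hent G hGopen hcG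
    obtain ⟨A, hA, hAsub⟩ := hGopen c hcG
    obtain ⟨m, hm⟩ := hent A hA
    exact ⟨m, fun n hn => hAsub (hm n hn)⟩

theorem stmt_8 {I : Type} {X : I → Type} [∀ i, Nonempty (X i)]
    (U : ∀ i, Set (Set (X i × X i))) (hU : ∀ i, IsGQU (U i)) :
    CompleteGQU (piGQU U) ↔ ∀ i : I, CompleteGQU (U i) := by
  have hpre : ∀ (i : I), ∀ A ∈ U i,
      Prod.map (fun x : ∀ j, X j => x i) (fun x : ∀ j, X j => x i) ⁻¹' A ∈ piGQU U :=
    fun i A hA => ⟨_, ⟨i, A, hA, rfl⟩, subset_rfl⟩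
  -- piGQU is a GQU when I is nonempty
  have hpiGQU : ∀ (_ : I), IsGQU (piGQU U) := by
    intro i0
    refine ⟨⟨_, hpre i0 _ (hU i0).1.choose_spec⟩, ?_, ?_, ?_⟩
    · rintro A ⟨b, ⟨i, Ai, hAi, rfl⟩, hbA⟩ x
      exact hbA ((hU i).2.1 Ai hAi (x i))
    · rintro A ⟨b, hb, hbA⟩ B hAB
      exact ⟨b, hb, hbA.trans hAB⟩
    · rintro A ⟨b, ⟨i, Ai, hAi, rfl⟩, hbA⟩
      obtain ⟨V, hV, hVcomp⟩ := (hU i).2.2.2 Ai hAi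
      refine ⟨_, hpre i V hV, ?_⟩
      rintro ⟨x, z⟩ ⟨y, hxy, hyz⟩
      exact hbA (hVcomp ⟨y i, hxy, hyz⟩)
  constructor
  · -- product complete → each factor complete
    intro hcomp i D _ _ _ T hT
    classical
    have base : ∀ j, X j := fun j => Classical.arbitrary (X j)
    set S : D → ∀ j, X j := fun d => Function.update base i (T d) with hS
    have hScauchy : CauchyNet (piGQU U) S := by
      rintro A ⟨b, ⟨j, Aj, hAj, rfl⟩, hbA⟩
      by_cases hji : j = i
      · subst hji
        obtain ⟨m, hm⟩ := hT Aj hAj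
        refine ⟨m, fun p q hp hq => hbA ?_⟩
        show (S p j, S q j) ∈ Aj
        simpa [hS, Function.update_self] using hm p q hp hq
      · obtain ⟨m⟩ := ‹Nonempty D›
        refine ⟨m, fun p q _ _ => hbA ?_⟩
        show (S p j, S q j) ∈ Aj
        simp only [hS, Function.update_of_ne hji]
        exact (hU j).2.1 Aj hAj (base j)
    obtain ⟨c, hc⟩ := hcomp D S hScauchy
    refine ⟨c i, (convNet_iff_ent (hU i) T (c i)).2 ?_⟩
    intro A hA
    obtain ⟨m, hm⟩ := (convNet_iff_ent (hpiGQU i) S c).1 hc _ (hpre i A hA)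
    refine ⟨m, fun n hn => ?_⟩
    have := hm n hn
    simpa [hS, Function.update_self] using this
  · -- each factor complete → product complete
    intro hcomp D _ _ _ S hS
    have hcoord : ∀ i, ∃ ci : X i, ConvNet (U i) (fun d => S d i) ci := by
      intro i
      refine hcomp i D (fun d => S d i) ?_
      intro A hA
      obtain ⟨m, hm⟩ := hS _ (hpre i A hA)
      exact ⟨m, fun p q hp hq => hm p q hp hq⟩
    choose c hc using hcoord
    refine ⟨c, ?_⟩
    intro G hGopen hcG
    obtain ⟨A, hA, hAsub⟩ := hGopen c hcG
    obtain ⟨b, ⟨i, Ai, hAi, rfl⟩, hbA⟩ := hA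
    obtain ⟨m, hm⟩ := (convNet_iff_ent (hU i) (fun d => S d i) (c i)).1 (hc i) Ai hAi
    exact ⟨m, fun n hn => hAsub (hbA (hm n hn))⟩
end

section
/- In a compact generalized quasi-uniform space, every net has a cluster point; consequently, every compact generalized quasi-uniform space is strongly Lebesgue. -/
open Set

theorem stmt_9 {X : Type} (U : Set (Set (X × X))) (hU : IsGQU U)
    (hc : CompactGQU U) :
    (∀ (D : Type) [Preorder D] [IsDirected D (· ≤ ·)] [Nonempty D],
      ∀ S : D → X, ∃ c : X, ClusterPtNet U S c) ∧
    StronglyLebesgueGQU U := by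
  have key : ∀ (D : Type) [Preorder D] [IsDirected D (· ≤ ·)] [Nonempty D],
      ∀ S : D → X, ∃ c : X, ClusterPtNet U S c := by
    intro D _ _ _ S
    by_contra h
    push_neg at h
    have h' : ∀ c : X, ∃ G, G ∈ muU U ∧ c ∈ G ∧ ∃ n : D, ∀ m : D, n ≤ m → S m ∉ G := by
      intro c
      have hc' := h c
      unfold ClusterPtNet at hc'
      push_neg at hc'
      obtain ⟨G, hG, hcG, n, hn⟩ := hc'
      exact ⟨G, hG, hcG, n, hn⟩
    choose G hGmu hcG n hn using h'
    have hcov : ⋃₀ (Set.range G) = Set.univ := by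
      apply Set.eq_univ_of_forall
      intro x
      exact ⟨G x, ⟨x, rfl⟩, hcG x⟩
    obtain ⟨F, hFsub, hFfin, hFcov⟩ := hc (Set.range G) (fun A hA => by
      obtain ⟨c, rfl⟩ := hA; exact hGmu c) hcov
    -- choose for each f ∈ F a point c with G c = f
    have hchoose : ∀ f ∈ F, ∃ c : X, G c = f := fun f hf => hFsub hf
    haveI : Nonempty X := ⟨S (Classical.arbitrary D)⟩
    choose! φ hφ using hchoose
    have hfin : ((fun f => n (φ f)) '' F).Finite := hFfin.image _
    obtain ⟨M, hM⟩ := hfin.toFinset.exists_le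
    have : S M ∈ ⋃₀ F := hFcov ▸ Set.mem_univ (S M)
    obtain ⟨f, hfF, hSf⟩ := this
    have hle : n (φ f) ≤ M := hM _ (hfin.mem_toFinset.mpr ⟨f, hfF, rfl⟩)
    exact hn (φ f) M hle (by rw [hφ f hfF]; exact hSf)
  refine ⟨key, ?_⟩
  intro D _ _ _ S _
  exact key D S
end

section
/- If a generalized quasi-uniform space (X, U) is sequentially Lebesgue and U has a countable base, then (X, U) is weak G-complete. -/
open Set

theorem stmt_11 {X : Type} (U : Set (Set (X × X))) (hU : IsGQU U)
    (B : Set (Set (X × X))) (hB : IsGQUBaseOf U B) (hcnt : B.Countable)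
    (hseq : SeqLebesgueGQU U) : WeakGCompleteGQU U := by
  intro x hx
  by_cases hrep : ∃ y : X, {n : ℕ | x n = y}.Infinite
  · -- some value occurs infinitely often; it is a cluster point
    obtain ⟨y, hy⟩ := hrep
    refine ⟨y, fun G _ hyG n => ?_⟩
    by_contra hcon
    push_neg at hcon
    have hsub : {m : ℕ | x m = y} ⊆ Set.Iio n := by
      intro m hm
      by_contra hlt
      exact hcon m (by simpa using hlt) (hm ▸ hyG)
    exact hy ((Set.finite_Iio n).subset hsub)
  · push_neg at hrep
    have hfin : ∀ y : X, {n : ℕ | x n = y}.Finite := fun y =>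
      hrep y
    -- enumerate the base
    obtain ⟨b, hbB⟩ := hcnt.exists_eq_range hB.1
    have hbU : ∀ i : ℕ, b i ∈ U := fun i => hB.2.1 (hbB ▸ Set.mem_range_self i)
    have hbase : ∀ A ∈ U, ∃ i : ℕ, b i ⊆ A := by
      intro A hA
      obtain ⟨b', hb', hsub⟩ := hB.2.2 A hA
      rw [hbB] at hb'
      obtain ⟨i, rfl⟩ := hb'
      exact ⟨i, hsub⟩
    -- beyond some index, values differ from all of x 0, ..., x N
    have hg : ∀ N : ℕ, ∃ M : ℕ, ∀ q, M ≤ q → ∀ j ≤ N, x q ≠ x j := by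
      intro N
      have hfs : (⋃ j ∈ Set.Iic N, {n : ℕ | x n = x j}).Finite :=
        Set.Finite.biUnion (Set.finite_Iic N) (fun j _ => hfin (x j))
      obtain ⟨M, hM⟩ := hfs.bddAbove
      refine ⟨M + 1, fun q hq j hj hEq => ?_⟩
      have : q ∈ ⋃ j ∈ Set.Iic N, {n : ℕ | x n = x j} :=
        Set.mem_biUnion hj hEq
      exact absurd (hM this) (by omega)
    -- key: arbitrarily late consecutive pairs with distinct values in each base entourage
    have key : ∀ i N : ℕ, ∃ n : ℕ, N ≤ n ∧ x n ≠ x (n + 1) ∧ (x n, x (n + 1)) ∈ b i := by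
      intro i N
      obtain ⟨k, hk⟩ := hx (b i) (hbU i)
      by_contra hcon
      push_neg at hcon
      set M := max k N with hM
      have hconst : ∀ d : ℕ, x (M + d) = x M := by
        intro d
        induction d with
        | zero => rfl
        | succ d ih =>
          have h1 : x (M + d) = x (M + d + 1) := by
            by_contra hne
            exact (hcon (M + d) (le_trans (le_max_right k N) (Nat.le_add_right _ _)) hne
              (hk _ (le_trans (le_max_left k N) (Nat.le_add_right _ _)))).elim
          rw [show M + (d + 1) = M + d + 1 from rfl, ← h1, ih]
      have hsub : Set.Ici M ⊆ {n : ℕ | x n = x M} := by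
        intro q hq
        have : q = M + (q - M) := (Nat.add_sub_cancel' hq).symm
        rw [Set.mem_setOf_eq, this, hconst]
      exact Set.Ici_infinite M ((hfin (x M)).subset hsub)
    -- an enumeration hitting each index cofinally
    set e : ℕ → ℕ := fun t => (Nat.unpair t).1 with he_def
    have he : ∀ i p : ℕ, ∃ t : ℕ, p ≤ t ∧ e t = i := fun i p =>
      ⟨Nat.pair i p, Nat.right_le_pair i p, by simp [he_def]⟩
    -- recursive construction
    set step : ℕ → ℕ → ℕ := fun t p =>
      Classical.choose (key (e t) (max (Classical.choose (hg (p + 1))) (p + 2))) with hstep_def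
    have hstep : ∀ t p : ℕ, p + 2 ≤ step t p ∧ x (step t p) ≠ x (step t p + 1) ∧
        (x (step t p), x (step t p + 1)) ∈ b (e t) ∧
        ∀ q, step t p ≤ q → ∀ j ≤ p + 1, x q ≠ x j := by
      intro t p
      obtain ⟨h1, h2, h3⟩ :=
        Classical.choose_spec (key (e t) (max (Classical.choose (hg (p + 1))) (p + 2)))
      refine ⟨le_trans (le_max_right _ _) h1, h2, h3, fun q hq j hj => ?_⟩
      exact Classical.choose_spec (hg (p + 1)) q
        (le_trans (le_trans (le_max_left _ _) h1) hq) j hj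
    set m : ℕ → ℕ := fun t => Nat.rec (step 0 0) (fun t ih => step (t + 1) ih) t with hm_def
    have hm_succ : ∀ t : ℕ, m (t + 1) = step (t + 1) (m t) := fun t => rfl
    have hm1 : ∀ t : ℕ, m t + 2 ≤ m (t + 1) := fun t => (hstep (t + 1) (m t)).1
    have hm2 : ∀ t : ℕ, x (m t) ≠ x (m t + 1) := by
      intro t
      cases t with
      | zero => exact (hstep 0 0).2.1
      | succ t => exact (hstep (t + 1) (m t)).2.1
    have hm3 : ∀ t : ℕ, (x (m t), x (m t + 1)) ∈ b (e t) := by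
      intro t
      cases t with
      | zero => exact (hstep 0 0).2.2.1
      | succ t => exact (hstep (t + 1) (m t)).2.2.1
    have hm4 : ∀ t : ℕ, ∀ q, m (t + 1) ≤ q → ∀ j ≤ m t + 1, x q ≠ x j :=
      fun t => (hstep (t + 1) (m t)).2.2.2
    have hmono : ∀ s t : ℕ, s < t → m s + 2 ≤ m t := by
      intro s t h
      induction t with
      | zero => omega
      | succ t ih =>
        rcases Nat.lt_succ_iff_lt_or_eq.mp h with h' | h'
        · have := hm1 t; have := ih h'; omega
        · subst h'; exact hm1 s
    have hmge : ∀ t : ℕ, t ≤ m t := by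
      intro t
      induction t with
      | zero => exact Nat.zero_le _
      | succ t ih => have := hm1 t; omega
    -- the subsequence
    set y : ℕ → X := fun k => x (m (k / 2) + k % 2) with hy_def
    have hyform : ∀ t : ℕ, y (2 * t) = x (m t) ∧ y (2 * t + 1) = x (m t + 1) := by
      intro t
      constructor
      · show x (m ((2 * t) / 2) + (2 * t) % 2) = x (m t)
        have e1 : (2 * t) / 2 = t := by omega
        have e2 : (2 * t) % 2 = 0 := by omega
        rw [e1, e2, Nat.add_zero]
      · show x (m ((2 * t + 1) / 2) + (2 * t + 1) % 2) = x (m t + 1)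
        have e1 : (2 * t + 1) / 2 = t := by omega
        have e2 : (2 * t + 1) % 2 = 1 := by omega
        rw [e1, e2]
    have hdist : DistinctTerms y := by
      have claim : ∀ k l : ℕ, k < l → y k ≠ y l := by
        intro k l hkl
        show x (m (k / 2) + k % 2) ≠ x (m (l / 2) + l % 2)
        rcases Nat.lt_or_ge (k / 2) (l / 2) with h | h
        · intro hEq
          have hle : m (k / 2 + 1) ≤ m (l / 2) := by
            rcases Nat.eq_or_lt_of_le (Nat.succ_le_of_lt h) with h' | h'
            · exact le_of_eq (congrArg m h')
            · have := hmono (k / 2 + 1) (l / 2) h'; omega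
          have hq : m (k / 2 + 1) ≤ m (l / 2) + l % 2 := by omega
          exact hm4 (k / 2) (m (l / 2) + l % 2) hq (m (k / 2) + k % 2)
            (by have := Nat.mod_lt k (show 0 < 2 by omega); omega) hEq.symm
        · have h2 : k / 2 = l / 2 := by omega
          have h3 : k % 2 = 0 ∧ l % 2 = 1 := by omega
          rw [h2, h3.1, h3.2]
          simpa using hm2 (l / 2)
      intro k l hne
      rcases hne.lt_or_gt with h | h
      · exact claim k l h
      · exact (claim l k h).symm
    have hpc : PseudoCauchyNet U y := by
      intro A hA p
      obtain ⟨i, hi⟩ := hbase A hA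
      obtain ⟨t, htp, hte⟩ := he i p
      refine ⟨2 * t, 2 * t + 1, by omega, by omega, by omega, ?_⟩
      rw [(hyform t).1, (hyform t).2]
      exact hi (hte ▸ hm3 t)
    obtain ⟨c, hc⟩ := hseq y hpc hdist
    refine ⟨c, fun G hG hcG n => ?_⟩
    obtain ⟨k, hk, hkG⟩ := hc G hG hcG (2 * n)
    refine ⟨m (k / 2) + k % 2, ?_, hkG⟩
    have h1 : n ≤ k / 2 := by omega
    have := hmge (k / 2)
    omega
end

section
/- Let ℤ be endowed with the generalized quasi-uniformity U generated by the discrete metric (i.e., U consists of all supersets of the diagonal Δ(ℤ)). Then (ℤ, U) is Lebesgue but not strongly Lebesgue: the sequence 1,1,2,2,3,3,… is pseudo-Cauchy but has no cluster point. -/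
open Set

theorem stmt_12 :
    IsGQU {A : Set (ℤ × ℤ) | ∀ x : ℤ, (x, x) ∈ A} ∧
    LebesgueGQU {A : Set (ℤ × ℤ) | ∀ x : ℤ, (x, x) ∈ A} ∧
    PseudoCauchyNet {A : Set (ℤ × ℤ) | ∀ x : ℤ, (x, x) ∈ A}
      (fun n : ℕ => (n / 2 : ℕ) + 1 : ℕ → ℤ) ∧
    (¬ ∃ c : ℤ, ClusterPtNet {A : Set (ℤ × ℤ) | ∀ x : ℤ, (x, x) ∈ A}
      (fun n : ℕ => (n / 2 : ℕ) + 1 : ℕ → ℤ) c) ∧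
    ¬ StronglyLebesgueGQU {A : Set (ℤ × ℤ) | ∀ x : ℤ, (x, x) ∈ A} := by
  set U : Set (Set (ℤ × ℤ)) := {A : Set (ℤ × ℤ) | ∀ x : ℤ, (x, x) ∈ A} with hU
  have hdiag : {p : ℤ × ℤ | p.1 = p.2} ∈ U := fun x => rfl
  have hpc : PseudoCauchyNet U (fun n : ℕ => (n / 2 : ℕ) + 1 : ℕ → ℤ) := by
    intro A hA p
    refine ⟨2 * p, 2 * p + 1, by omega, by omega, by omega, ?_⟩
    have : (2 * p) / 2 = (2 * p + 1) / 2 := by omega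
    simp only [this]
    exact hA _
  have hncl : ¬ ∃ c : ℤ, ClusterPtNet U (fun n : ℕ => (n / 2 : ℕ) + 1 : ℕ → ℤ) c := by
    rintro ⟨c, hc⟩
    have hopen : {c} ∈ muU U := by
      intro x hx
      refine ⟨{p : ℤ × ℤ | p.1 = p.2}, hdiag, ?_⟩
      intro y hy
      simp only [Set.mem_setOf_eq] at hy
      simp only [Set.mem_singleton_iff] at hx ⊢
      rw [← hy, hx]
    obtain ⟨m, hm, hSm⟩ := hc {c} hopen rfl (2 * c.toNat)
    simp only [Set.mem_singleton_iff] at hSm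
    have h1 : (m / 2 : ℕ) ≥ c.toNat := by omega
    have : ((m / 2 : ℕ) : ℤ) + 1 = c := hSm
    omega
  refine ⟨⟨⟨Set.univ, fun _ => trivial⟩, fun A hA x => hA x,
      fun A hA B hAB x => hAB (hA x), fun A hA => ⟨{p : ℤ × ℤ | p.1 = p.2}, hdiag, ?_⟩⟩,
      ?_, hpc, hncl, ?_⟩
  · rintro ⟨x, y⟩ ⟨z, hxz, hzy⟩
    simp only [Set.mem_setOf_eq] at hxz hzy
    rw [show x = y from hxz.trans hzy]
    exact hA y
  · intro D _ _ _ S hS hd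
    exfalso
    obtain ⟨p⟩ := ‹Nonempty D›
    obtain ⟨m, n, _, _, hmn, hSmn⟩ := hS {p : ℤ × ℤ | p.1 = p.2} hdiag p
    exact hd m n hmn hSmn
  · intro h
    exact hncl (h ℕ (fun n : ℕ => (n / 2 : ℕ) + 1 : ℕ → ℤ) hpc)
end

section
/- Let (X, U) be the product generalized quasi-uniform space of a family {(X_i, U_i) : i ∈ I}. A net (R_n)_{n∈D} in X is pseudo-Cauchy if and only if for each i ∈ I the net (π_i(R_n))_{n∈D} is pseudo-Cauchy in (X_i, U_i). -/
open Set

theorem stmt_13 {I : Type} {X : I → Type}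
    (U : ∀ i, Set (Set (X i × X i))) (hU : ∀ i, IsGQU (U i))
    (D : Type) [Preorder D] [IsDirected D (· ≤ ·)] [Nonempty D]
    (R : D → ∀ i, X i) :
    PseudoCauchyNet (piGQU U) R ↔ ∀ i : I, PseudoCauchyNet (U i) (fun n => R n i) := by
  constructor
  · intro h i A hA p
    obtain ⟨m, n, hm, hn, hmn, hmem⟩ := h (Prod.map (fun x : ∀ j, X j => x i) (fun x => x i) ⁻¹' A)
      ⟨_, ⟨i, A, hA, rfl⟩, subset_rfl⟩ p
    exact ⟨m, n, hm, hn, hmn, hmem⟩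
  · intro h A hA p
    obtain ⟨b, ⟨i, A', hA', rfl⟩, hba⟩ := hA
    obtain ⟨m, n, hm, hn, hmn, hmem⟩ := h i A' hA' p
    exact ⟨m, n, hm, hn, hmn, hba hmem⟩
end

section
/- Let (X, U) be the product generalized quasi-uniform space of a family {(X_i, U_i) : i ∈ I} with each X_i nonempty. Then (X, U) is strongly Lebesgue if and only if each (X_i, U_i) is strongly Lebesgue. -/
open Set

lemma exists_open_ball {X : Type} {U : Set (Set (X × X))} (hU : IsGQU U)
    {A : Set (X × X)} (hA : A ∈ U) (c : X) :
    ∃ G ∈ muU U, c ∈ G ∧ G ⊆ {y | (c, y) ∈ A} := by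
  obtain ⟨_, hrefl, _, hcomp⟩ := hU
  refine ⟨{x | ∃ V ∈ U, {y | (x, y) ∈ V} ⊆ {y | (c, y) ∈ A}}, ?_, ?_, ?_⟩
  · intro x hx
    obtain ⟨V, hV, hVsub⟩ := hx
    obtain ⟨W, hW, hWW⟩ := hcomp V hV
    refine ⟨W, hW, fun y hy => ⟨W, hW, fun z hz => hVsub (hWW ⟨y, hy, hz⟩)⟩⟩
  · obtain ⟨W, hW, hWW⟩ := hcomp A hA
    exact ⟨W, hW, fun y hy => hWW ⟨c, hrefl W hW c, hy⟩⟩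
  · rintro x ⟨V, hV, hsub⟩
    exact hsub (hrefl V hV x)

theorem stmt_15 {I : Type} {X : I → Type} [∀ i, Nonempty (X i)]
    (U : ∀ i, Set (Set (X i × X i))) (hU : ∀ i, IsGQU (U i)) :
    StronglyLebesgueGQU (piGQU U) ↔ ∀ i : I, StronglyLebesgueGQU (U i) := by
  classical
  constructor
  · intro hSL i D _ _ _ S hS
    obtain ⟨b⟩ : Nonempty (∀ j, X j) := ⟨fun j => Classical.arbitrary _⟩
    set T : D → ∀ j, X j := fun n => Function.update b i (S n) with hTdef
    have hT : PseudoCauchyNet (piGQU U) T := by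
      rintro A ⟨bse, ⟨j, Aj, hAj, rfl⟩, hsub⟩ p
      by_cases hji : j = i
      · subst hji
        obtain ⟨m, n, hm, hn, hmn, hSmn⟩ := hS Aj hAj p
        refine ⟨m, n, hm, hn, hmn, hsub ?_⟩
        show (T m j, T n j) ∈ Aj
        simpa [hTdef] using hSmn
      · obtain ⟨A0, hA0⟩ := (hU i).1
        obtain ⟨m, n, hm, hn, hmn, _⟩ := hS A0 hA0 p
        refine ⟨m, n, hm, hn, hmn, hsub ?_⟩
        show (T m j, T n j) ∈ Aj
        simpa [hTdef, Function.update_of_ne hji] using (hU j).2.1 Aj hAj (b j)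
    obtain ⟨c, hc⟩ := hSL D T hT
    refine ⟨c i, ?_⟩
    intro G hG hcG n
    have hpre : (fun x : ∀ j, X j => x i) ⁻¹' G ∈ muU (piGQU U) := by
      intro x hx
      obtain ⟨A, hA, hball⟩ := hG (x i) hx
      exact ⟨Prod.map (fun x : ∀ j, X j => x i) (fun x : ∀ j, X j => x i) ⁻¹' A,
        ⟨_, ⟨i, A, hA, rfl⟩, subset_rfl⟩, fun y hy => hball hy⟩
    obtain ⟨m, hm, hTm⟩ := hc _ hpre hcG n
    refine ⟨m, hm, ?_⟩
    simpa [hTdef] using hTm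
  · intro h D _ _ _ S hS
    have hcoord : ∀ i, ∃ c, ClusterPtNet (U i) (fun n => S n i) c := by
      intro i
      apply h i D
      intro A hA p
      obtain ⟨m, n, hm, hn, hmn, hS'⟩ := hS
        (Prod.map (fun x : ∀ j, X j => x i) (fun x : ∀ j, X j => x i) ⁻¹' A)
        ⟨_, ⟨i, A, hA, rfl⟩, subset_rfl⟩ p
      exact ⟨m, n, hm, hn, hmn, hS'⟩
    choose c hc using hcoord
    refine ⟨c, ?_⟩
    intro G hG hcG n
    obtain ⟨A, hA, hball⟩ := hG c hcG
    obtain ⟨bse, ⟨i, Ai, hAi, rfl⟩, hsub⟩ := hA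
    obtain ⟨G', hG', hcG', hG'sub⟩ := exists_open_ball (hU i) hAi (c i)
    obtain ⟨m, hm, hSm⟩ := hc i G' hG' hcG' n
    exact ⟨m, hm, hball (hsub (hG'sub hSm))⟩
end

section
/- Let (X, U) be the product generalized quasi-uniform space of a family {(X_i, U_i) : i ∈ I} with each X_i nonempty. If (X, U) is Lebesgue, then each (X_i, U_i) is Lebesgue. -/
open Set

theorem stmt_16 {I : Type} {X : I → Type} [∀ i, Nonempty (X i)]
    (U : ∀ i, Set (Set (X i × X i))) (hU : ∀ i, IsGQU (U i))
    (h : LebesgueGQU (piGQU U)) : ∀ i : I, LebesgueGQU (U i) := by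
  intro i D _ _ _ S hPC hDT
  classical
  set c0 : ∀ j, X j := fun j => Classical.arbitrary (X j) with hc0
  set T : D → ∀ j, X j := fun n => Function.update c0 i (S n) with hT
  have hTi : ∀ n, T n i = S n := fun n => Function.update_self i (S n) c0
  have hTPC : PseudoCauchyNet (piGQU U) T := by
    intro A hA p
    obtain ⟨b, ⟨j, Aj, hAj, rfl⟩, hbA⟩ := hA
    by_cases hji : j = i
    · subst hji
      obtain ⟨m, n, hm, hn, hmn, hS⟩ := hPC Aj hAj p
      exact ⟨m, n, hm, hn, hmn, hbA (by simpa [hTi] using hS)⟩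
    · obtain ⟨Ai, hAi⟩ := (hU i).1
      obtain ⟨m, n, hm, hn, hmn, _⟩ := hPC Ai hAi p
      refine ⟨m, n, hm, hn, hmn, hbA ?_⟩
      have heq : T m j = T n j := by
        simp [hT, Function.update_of_ne hji]
      show (T m j, T n j) ∈ Aj
      rw [heq]
      exact (hU j).2.1 Aj hAj (T n j)
  have hTDT : DistinctTerms T := by
    intro m n hmn heq
    exact hDT m n hmn (by rw [← hTi m, ← hTi n, heq])
  obtain ⟨c, hc⟩ := h D T hTPC hTDT
  refine ⟨c i, ?_⟩
  intro G hG hciG n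
  have hGpre : (fun x : ∀ j, X j => x i) ⁻¹' G ∈ muU (piGQU U) := by
    intro x hx
    obtain ⟨A, hA, hAG⟩ := hG (x i) hx
    refine ⟨Prod.map (fun x : ∀ j, X j => x i) (fun x : ∀ j, X j => x i) ⁻¹' A,
      ⟨_, ⟨i, A, hA, rfl⟩, subset_rfl⟩, ?_⟩
    intro y hy
    exact hAG hy
  obtain ⟨m, hnm, hm⟩ := hc _ hGpre hciG n
  exact ⟨m, hnm, by simpa [hTi] using hm⟩
end

section
/- Let (X, U) be the product generalized quasi-uniform space of a family {(X_i, U_i) : i ∈ I} with each X_i nonempty. If (X, U) is sequentially Lebesgue, then each (X_i, U_i) is sequentially Lebesgue. -/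
open Set

theorem stmt_17 {I : Type} {X : I → Type} [∀ i, Nonempty (X i)]
    (U : ∀ i, Set (Set (X i × X i))) (hU : ∀ i, IsGQU (U i))
    (h : SeqLebesgueGQU (piGQU U)) : ∀ i : I, SeqLebesgueGQU (U i) := by
  intro i x hpc hdist
  classical
  obtain ⟨b0⟩ : Nonempty (∀ j, X j) := ⟨fun j => Classical.arbitrary (X j)⟩
  set y : ℕ → ∀ j, X j := fun n => Function.update b0 i (x n) with hy
  have hyi : ∀ n, y n i = x n := fun n => Function.update_self i (x n) b0
  -- y is pseudo-Cauchy in the product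
  have hypc : PseudoCauchyNet (piGQU U) y := by
    intro A hA p
    obtain ⟨b, ⟨j, Aj, hAj, rfl⟩, hbA⟩ := hA
    by_cases hji : j = i
    · subst hji
      obtain ⟨m, n, hpm, hpn, hmn, hx⟩ := hpc Aj hAj p
      refine ⟨m, n, hpm, hpn, hmn, hbA ?_⟩
      simp only [mem_preimage, Prod.map]
      simpa [hyi] using hx
    · refine ⟨p, p + 1, le_refl p, Nat.le_succ p, by omega, hbA ?_⟩
      simp only [mem_preimage, Prod.map]
      have : ∀ n, y n j = b0 j := fun n => Function.update_of_ne hji _ _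
      rw [this, this]
      exact (hU j).2.1 Aj hAj (b0 j)
  have hydist : DistinctTerms y := by
    intro m n hmn hye
    exact hdist m n hmn (by rw [← hyi m, ← hyi n, hye])
  obtain ⟨c, hc⟩ := h y hypc hydist
  refine ⟨c i, ?_⟩
  intro G hG hcG n
  have hG' : (fun z : ∀ j, X j => z i) ⁻¹' G ∈ muU (piGQU U) := by
    intro z hz
    obtain ⟨A, hA, hball⟩ := hG (z i) hz
    refine ⟨Prod.map (fun x : ∀ j, X j => x i) (fun x : ∀ j, X j => x i) ⁻¹' A,
      ⟨_, ⟨i, A, hA, rfl⟩, subset_rfl⟩, ?_⟩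
    intro w hw
    exact hball hw
  obtain ⟨m, hnm, hym⟩ := hc _ hG' hcG n
  exact ⟨m, hnm, by rwa [mem_preimage, hyi] at hym⟩
end

section
/- Let (X, U) be the product generalized quasi-uniform space of a family {(X_i, U_i) : i ∈ I} with each X_i nonempty. Then (X, U) is weak G-complete if and only if each (X_i, U_i) is weak G-complete. -/
open Set

lemma cluster_iff_ent {X : Type} {U : Set (Set (X × X))}
    (hrefl : ∀ A ∈ U, ∀ x : X, (x, x) ∈ A)
    (hcomp : ∀ A ∈ U, ∃ V ∈ U, SetRel.comp V V ⊆ A)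
    {D : Type} [Preorder D] {S : D → X} {c : X} :
    ClusterPtNet U S c ↔ ∀ A ∈ U, ∀ n : D, ∃ m : D, n ≤ m ∧ (c, S m) ∈ A := by
  constructor
  · intro h A hA n
    obtain ⟨V, hV, hVV⟩ := hcomp A hA
    set G : Set X :=
      {y | (c, y) ∈ A ∧ ∃ W ∈ U, {z | (y, z) ∈ W} ⊆ {z | (c, z) ∈ A}} with hGdef
    have hGopen : G ∈ muU U := by
      rintro y ⟨hy1, W, hW, hWsub⟩
      obtain ⟨W', hW', hW'W⟩ := hcomp W hW
      refine ⟨W', hW', ?_⟩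
      intro z hz
      have hzW : (y, z) ∈ W := hW'W ⟨z, hz, hrefl W' hW' z⟩
      exact ⟨hWsub hzW, W', hW', fun t ht => hWsub (hW'W ⟨z, hz, ht⟩)⟩
    have hcG : c ∈ G :=
      ⟨hrefl A hA c, V, hV, fun y hy => hVV ⟨c, hrefl V hV c, hy⟩⟩
    obtain ⟨m, hm, hmG⟩ := h G hGopen hcG n
    exact ⟨m, hm, hmG.1⟩
  · intro h G hG hcG n
    obtain ⟨A, hA, hAsub⟩ := hG c hcG
    obtain ⟨m, hm, hmA⟩ := h A hA n
    exact ⟨m, hm, hAsub hmA⟩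

lemma piGQU_refl {I : Type} {X : I → Type} {U : ∀ i, Set (Set (X i × X i))}
    (hU : ∀ i, IsGQU (U i)) :
    ∀ A ∈ piGQU U, ∀ x : ∀ i, X i, (x, x) ∈ A := by
  rintro A ⟨b, ⟨i, Ai, hAi, rfl⟩, hbA⟩ x
  exact hbA ((hU i).2.1 Ai hAi (x i))

lemma piGQU_comp {I : Type} {X : I → Type} {U : ∀ i, Set (Set (X i × X i))}
    (hU : ∀ i, IsGQU (U i)) :
    ∀ A ∈ piGQU U, ∃ V ∈ piGQU U, SetRel.comp V V ⊆ A := by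
  rintro A ⟨b, ⟨i, Ai, hAi, rfl⟩, hbA⟩
  obtain ⟨V, hV, hVV⟩ := (hU i).2.2.2 Ai hAi
  refine ⟨Prod.map (fun x : ∀ j, X j => x i) (fun x : ∀ j, X j => x i) ⁻¹' V,
    ⟨_, ⟨i, V, hV, rfl⟩, subset_rfl⟩, ?_⟩
  rintro ⟨x, z⟩ ⟨y, hxy, hyz⟩
  exact hbA (hVV ⟨y i, hxy, hyz⟩)

theorem stmt_18 {I : Type} {X : I → Type} [∀ i, Nonempty (X i)]
    (U : ∀ i, Set (Set (X i × X i))) (hU : ∀ i, IsGQU (U i)) :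
    WeakGCompleteGQU (piGQU U) ↔ ∀ i : I, WeakGCompleteGQU (U i) := by
  haveI := Classical.decEq I
  have hreflP := piGQU_refl hU
  have hcompP := piGQU_comp hU
  constructor
  · intro h i y hy
    set p : ∀ j, X j := fun j => Classical.arbitrary (X j) with hp
    set x : ℕ → ∀ j, X j := fun n => Function.update p i (y n) with hx
    have hxi : ∀ n, x n i = y n := fun n => Function.update_self i (y n) p
    have hxC : GCauchySeq (piGQU U) x := by
      rintro A ⟨b, ⟨j, Aj, hAj, rfl⟩, hbA⟩
      by_cases hji : j = i
      · subst hji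
        obtain ⟨k, hk⟩ := hy Aj hAj
        refine ⟨k, fun n hn => hbA ?_⟩
        show (x n j, x (n+1) j) ∈ Aj
        rw [hxi, hxi]; exact hk n hn
      · refine ⟨0, fun n _ => hbA ?_⟩
        show (x n j, x (n+1) j) ∈ Aj
        have e : ∀ m, x m j = p j := fun m => Function.update_of_ne hji _ _
        rw [e, e]; exact (hU j).2.1 Aj hAj (p j)
    obtain ⟨c, hc⟩ := h x hxC
    rw [cluster_iff_ent hreflP hcompP] at hc
    refine ⟨c i, ?_⟩
    rw [cluster_iff_ent (hU i).2.1 (hU i).2.2.2]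
    intro A hA n
    have hmem : Prod.map (fun x : ∀ j, X j => x i) (fun x : ∀ j, X j => x i) ⁻¹' A
        ∈ piGQU U := ⟨_, ⟨i, A, hA, rfl⟩, subset_rfl⟩
    obtain ⟨m, hm, hmA⟩ := hc _ hmem n
    refine ⟨m, hm, ?_⟩
    have : (c i, x m i) ∈ A := hmA
    rwa [hxi] at this
  · intro h x hx
    have hyC : ∀ i, GCauchySeq (U i) (fun n => x n i) := by
      intro i A hA
      have hmem : Prod.map (fun x : ∀ j, X j => x i) (fun x : ∀ j, X j => x i) ⁻¹' A
          ∈ piGQU U := ⟨_, ⟨i, A, hA, rfl⟩, subset_rfl⟩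
      obtain ⟨k, hk⟩ := hx _ hmem
      exact ⟨k, fun n hn => hk n hn⟩
    have hcl : ∀ i, ∃ ci : X i, ClusterPtNet (U i) (fun n => x n i) ci :=
      fun i => h i _ (hyC i)
    choose c hc using hcl
    refine ⟨c, ?_⟩
    rw [cluster_iff_ent hreflP hcompP]
    rintro A ⟨b, ⟨i, Ai, hAi, rfl⟩, hbA⟩ n
    have := (cluster_iff_ent (hU i).2.1 (hU i).2.2.2).mp (hc i) Ai hAi n
    obtain ⟨m, hm, hmA⟩ := this
    exact ⟨m, hm, hbA hmA⟩
end
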